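/- For every γ ∈ SL(2,ℝ) and every Haar measure μ on SL(2,ℝ), the topological closure of the conjugacy class [γ] is a set of μ-measure zero. -/

import Mathlib

open Matrix MeasureTheory

/-- `SL(2,ℝ)`: the group of 2×2 real matrices of determinant 1. -/
abbrev SL2 := Matrix.SpecialLinearGroup (Fin 2) ℝ

/-- The topology on `SL(2,ℝ)` is the subspace topology inherited from the
space of 2×2 real matrices. -/
instance : TopologicalSpace SL2 :=
  TopologicalSpace.induced (fun g : SL2 => (g : Matrix (Fin 2) (Fin 2) ℝ)) inferInstance

/-- The conjugacy class `[γ] = {g γ g⁻¹ : g ∈ SL(2,ℝ)}`. -/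
def conjClass (γ : SL2) : Set SL2 := {x | ∃ g : SL2, g * γ * g⁻¹ = x}

/-- The rotation matrix `k_θ = [[cos θ, −sin θ],[sin θ, cos θ]]` as an element of `SL(2,ℝ)`. -/
noncomputable def kmat (θ : ℝ) : SL2 :=
  ⟨!![Real.cos θ, -Real.sin θ; Real.sin θ, Real.cos θ], by
    simp [Matrix.det_fin_two_of]
    nlinarith [Real.sin_sq_add_cos_sq θ]⟩

/-- The diagonal matrix `a_t = [[eᵗ, 0],[0, e⁻ᵗ]]` as an element of `SL(2,ℝ)`. -/
noncomputable def amat (t : ℝ) : SL2 :=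
  ⟨!![Real.exp t, 0; 0, Real.exp (-t)], by
    simp [Matrix.det_fin_two_of, ← Real.exp_add]⟩

/-- The unipotent matrix `n_u = [[1, u],[0, 1]]` as an element of `SL(2,ℝ)`. -/
def nmat (u : ℝ) : SL2 :=
  ⟨!![1, u; 0, 1], by simp [Matrix.det_fin_two_of]⟩

/-- The lower unipotent matrix `[[1, 0],[t, 1]]`. -/
def lmat (t : ℝ) : SL2 :=
  ⟨!![1, 0; t, 1], by simp [Matrix.det_fin_two_of]⟩

lemma SL2.continuous_coe : Continuous (fun g : SL2 => (g : Matrix (Fin 2) (Fin 2) ℝ)) :=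
  continuous_induced_dom

lemma SL2.continuous_mul_left (g : SL2) : Continuous (fun x : SL2 => g * x) := by
  apply continuous_induced_rng.2
  have h : ((fun g : SL2 => (g : Matrix (Fin 2) (Fin 2) ℝ)) ∘ fun x : SL2 => g * x)
      = fun x : SL2 => (g : Matrix (Fin 2) (Fin 2) ℝ) * (x : Matrix (Fin 2) (Fin 2) ℝ) := by
    funext x
    simp
  rw [h]
  exact continuous_const.matrix_mul SL2.continuous_coe

lemma SL2.isClosedEmbedding :
    Topology.IsClosedEmbedding (fun g : SL2 => (g : Matrix (Fin 2) (Fin 2) ℝ)) := by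
  refine ⟨⟨⟨rfl⟩, fun a b hab => Subtype.coe_injective hab⟩, ?_⟩
  have : Set.range (fun g : SL2 => (g : Matrix (Fin 2) (Fin 2) ℝ))
      = {M : Matrix (Fin 2) (Fin 2) ℝ | M.det = 1} := by
    ext M
    constructor
    · rintro ⟨g, rfl⟩; exact g.2
    · intro hM; exact ⟨⟨M, hM⟩, rfl⟩
  rw [this]
  exact isClosed_eq (continuous_id.matrix_det) continuous_const

instance : SigmaCompactSpace (Matrix (Fin 2) (Fin 2) ℝ) :=
  inferInstanceAs (SigmaCompactSpace (Fin 2 → Fin 2 → ℝ))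

instance : SigmaCompactSpace SL2 := SL2.isClosedEmbedding.sigmaCompactSpace

lemma SL2.meas_preimage_mul [MeasurableSpace SL2] [BorelSpace SL2]
    (μ : MeasureTheory.Measure SL2) [μ.IsMulLeftInvariant] (g : SL2) {D : Set SL2}
    (hD : MeasurableSet D) : μ ((fun x => g * x) ⁻¹' D) = μ D := by
  conv_rhs => rw [← MeasureTheory.map_mul_left_eq_self μ g]
  rw [MeasureTheory.Measure.map_apply ((SL2.continuous_mul_left g).measurable) hD]

lemma SL2.det_entries (x : SL2) :
    (x : Matrix (Fin 2) (Fin 2) ℝ) 0 0 * (x : Matrix (Fin 2) (Fin 2) ℝ) 1 1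
      - (x : Matrix (Fin 2) (Fin 2) ℝ) 0 1 * (x : Matrix (Fin 2) (Fin 2) ℝ) 1 0 = 1 := by
  rw [← Matrix.det_fin_two]
  exact x.2

/-- The set of lower-left entry zero has Haar measure zero. -/
lemma SL2.meas_lowerLeftZero_eq_zero [MeasurableSpace SL2] [BorelSpace SL2]
    (μ : MeasureTheory.Measure SL2) [μ.IsHaarMeasure] :
    μ {x : SL2 | (x : Matrix (Fin 2) (Fin 2) ℝ) 1 0 = 0} = 0 := by
  set D : Set SL2 := {x : SL2 | (x : Matrix (Fin 2) (Fin 2) ℝ) 1 0 = 0} with hDdef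
  have hDclosed : IsClosed D :=
    isClosed_eq (SL2.continuous_coe.matrix_elem 1 0) continuous_const
  have hDmeas : MeasurableSet D := hDclosed.measurableSet
  set A : ℝ → Set SL2 := fun t => (fun x => lmat t * x) ⁻¹' D with hAdef
  have hAeq : ∀ t (x : SL2), x ∈ A t ↔
      t * (x : Matrix (Fin 2) (Fin 2) ℝ) 0 0 + (x : Matrix (Fin 2) (Fin 2) ℝ) 1 0 = 0 := by
    intro t x
    simp only [hAdef, Set.mem_preimage, hDdef, Set.mem_setOf_eq,
      Matrix.SpecialLinearGroup.coe_mul]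
    rw [Matrix.mul_apply, Fin.sum_univ_two]
    simp [lmat]
  have hAmeas : ∀ t, MeasurableSet (A t) :=
    fun t => hDmeas.preimage (SL2.continuous_mul_left (lmat t)).measurable
  have hAdisj : Pairwise (Function.onFun Disjoint A) := by
    intro t s hts
    rw [Function.onFun, Set.disjoint_left]
    intro x hxt hxs
    rw [hAeq] at hxt hxs
    have h00 : (x : Matrix (Fin 2) (Fin 2) ℝ) 0 0 = 0 := by
      have := sub_eq_zero.2 (hxt.trans hxs.symm)
      have h : (t - s) * (x : Matrix (Fin 2) (Fin 2) ℝ) 0 0 = 0 := by ring_nf; linarith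
      rcases mul_eq_zero.1 h with h' | h'
      · exact absurd (sub_eq_zero.1 h') hts
      · exact h'
    have h10 : (x : Matrix (Fin 2) (Fin 2) ℝ) 1 0 = 0 := by
      rw [h00] at hxt; linarith
    have := SL2.det_entries x
    rw [h00, h10] at this
    simp at this
  have hcount : Set.Countable {t : ℝ | 0 < μ (A t)} :=
    MeasureTheory.Measure.countable_meas_pos_of_disjoint_iUnion hAmeas hAdisj
  have : ∃ t : ℝ, ¬ (0 < μ (A t)) := by
    by_contra h
    push_neg at h
    have : ({t : ℝ | 0 < μ (A t)} : Set ℝ) = Set.univ := by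
      ext t; simpa using h t
    rw [this] at hcount
    exact Cardinal.not_countable_real (by simpa [Set.countable_univ_iff] using hcount)
  obtain ⟨t, ht⟩ := this
  have hAt : μ (A t) = 0 := by simpa using ht
  rw [← SL2.meas_preimage_mul μ (lmat t) hDmeas]
  exact hAt

/-- The closure of any conjugacy class in SL(2,ℝ) has measure zero with respect to
any (left-invariant, regular) Haar measure. -/
theorem haar_measure_closure_conjClass_eq_zero
    [MeasurableSpace SL2] [BorelSpace SL2] (γ : SL2)
    (μ : MeasureTheory.Measure SL2) [μ.IsHaarMeasure] [μ.Regular] :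
    μ (closure (conjClass γ)) = 0 := by
  set c : ℝ := Matrix.trace (γ : Matrix (Fin 2) (Fin 2) ℝ) with hc
  set T : Set SL2 := {x : SL2 | Matrix.trace (x : Matrix (Fin 2) (Fin 2) ℝ) = c} with hTdef
  have hTclosed : IsClosed T :=
    isClosed_eq (SL2.continuous_coe.matrix_trace) continuous_const
  have hTmeas : MeasurableSet T := hTclosed.measurableSet
  -- the conjugacy class is contained in the trace level set
  have hsub : conjClass γ ⊆ T := by
    rintro x ⟨g, rfl⟩
    simp only [hTdef, Set.mem_setOf_eq, Matrix.SpecialLinearGroup.coe_mul]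
    rw [Matrix.trace_mul_comm, ← mul_assoc, ← Matrix.SpecialLinearGroup.coe_mul,
      inv_mul_cancel, Matrix.SpecialLinearGroup.coe_one, one_mul]
  have hclos : closure (conjClass γ) ⊆ T := closure_minimal hsub hTclosed
  -- the lower-left-zero set, of measure zero
  have hD0 : μ {x : SL2 | (x : Matrix (Fin 2) (Fin 2) ℝ) 1 0 = 0} = 0 :=
    SL2.meas_lowerLeftZero_eq_zero μ
  -- translates of T
  set B : ℝ → Set SL2 := fun u => (fun x => nmat u * x) ⁻¹' T with hBdef
  have hBeq : ∀ u (x : SL2), x ∈ B u ↔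
      (x : Matrix (Fin 2) (Fin 2) ℝ) 0 0 + u * (x : Matrix (Fin 2) (Fin 2) ℝ) 1 0
        + (x : Matrix (Fin 2) (Fin 2) ℝ) 1 1 = c := by
    intro u x
    simp only [hBdef, Set.mem_preimage, hTdef, Set.mem_setOf_eq,
      Matrix.SpecialLinearGroup.coe_mul]
    rw [Matrix.trace_fin_two, Matrix.mul_apply, Matrix.mul_apply, Fin.sum_univ_two,
      Fin.sum_univ_two]
    simp [nmat]
  have hBmeas : ∀ u, NullMeasurableSet (B u) μ :=
    fun u => (hTmeas.preimage (SL2.continuous_mul_left (nmat u)).measurable).nullMeasurableSet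
  have hBdisj : Pairwise (Function.onFun (MeasureTheory.AEDisjoint μ) B) := by
    intro u v huv
    have hsubD : B u ∩ B v ⊆ {x : SL2 | (x : Matrix (Fin 2) (Fin 2) ℝ) 1 0 = 0} := by
      rintro x ⟨hxu, hxv⟩
      rw [hBeq] at hxu hxv
      have h : (u - v) * (x : Matrix (Fin 2) (Fin 2) ℝ) 1 0 = 0 := by ring_nf; linarith
      rcases mul_eq_zero.1 h with h' | h'
      · exact absurd (sub_eq_zero.1 h') huv
      · exact h'
    exact measure_mono_null hsubD hD0
  have hcount : Set.Countable {u : ℝ | 0 < μ (B u)} :=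
    MeasureTheory.Measure.countable_meas_pos_of_disjoint_iUnion₀ hBmeas hBdisj
  have : ∃ u : ℝ, ¬ (0 < μ (B u)) := by
    by_contra h
    push_neg at h
    have : ({u : ℝ | 0 < μ (B u)} : Set ℝ) = Set.univ := by
      ext u; simpa using h u
    rw [this] at hcount
    exact Cardinal.not_countable_real (by simpa [Set.countable_univ_iff] using hcount)
  obtain ⟨u, hu⟩ := this
  have hBu : μ (B u) = 0 := by simpa using hu
  have hT0 : μ T = 0 := by
    rw [← SL2.meas_preimage_mul μ (nmat u) hTmeas]
    exact hBu
  exact measure_mono_null hclos hT0
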